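/- arXiv:2305.05795 — 2 statements merged into one kernel-verified Lean document; each statement's English description precedes it below -/
import Mathlib

section
/- Let ε : M_n(ℂ) → M_m(ℂ) and ε' : M_{n'}(ℂ) → M_{m'}(ℂ) be completely positive trace-preserving maps. If ε is an extreme point of the convex set CPT(n,m) and ε' is an extreme point of CPT(n',m'), then their tensor product ε ⊗ ε' is an extreme point of CPT(n·n', m·m'). -/
open Matrix Kronecker

/-- A linear map between complex matrix algebras is completely positive iff it admits a
Kraus representation `Φ A = ∑ k, E k * A * (E k)ᴴ` for a finite family of matrices `E`. -/
def IsCP {ι κ : Type*} [Fintype ι]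
    (Φ : Matrix ι ι ℂ →ₗ[ℂ] Matrix κ κ ℂ) : Prop :=
  ∃ (N : ℕ) (E : Fin N → Matrix κ ι ℂ), ∀ A, Φ A = ∑ k, E k * A * (E k)ᴴ

/-- Trace preserving. -/
def IsTP {ι κ : Type*} [Fintype ι] [Fintype κ]
    (Φ : Matrix ι ι ℂ →ₗ[ℂ] Matrix κ κ ℂ) : Prop :=
  ∀ A, (Φ A).trace = A.trace

/-- Unital: sends the identity matrix to the identity matrix. -/
def IsUnital {ι κ : Type*} [Fintype ι] [DecidableEq ι] [DecidableEq κ]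
    (Φ : Matrix ι ι ℂ →ₗ[ℂ] Matrix κ κ ℂ) : Prop :=
  Φ 1 = 1

/-- The set of completely positive trace-preserving maps. -/
def CPTset (ι κ : Type*) [Fintype ι] [Fintype κ] :
    Set (Matrix ι ι ℂ →ₗ[ℂ] Matrix κ κ ℂ) :=
  {Φ | IsCP Φ ∧ IsTP Φ}

/-- The set of unital completely positive maps. -/
def UCPset (ι κ : Type*) [Fintype ι] [DecidableEq ι] [DecidableEq κ] :
    Set (Matrix ι ι ℂ →ₗ[ℂ] Matrix κ κ ℂ) :=
  {Φ | IsCP Φ ∧ IsUnital Φ}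

/-- The set of unital completely positive trace-preserving maps. -/
def UCPTset (ι : Type*) [Fintype ι] [DecidableEq ι] :
    Set (Matrix ι ι ℂ →ₗ[ℂ] Matrix ι ι ℂ) :=
  {Φ | IsCP Φ ∧ IsTP Φ ∧ IsUnital Φ}

/-- The Choi rank of a map: the minimal number of Kraus operators in a Kraus
representation. -/
noncomputable def CR {ι κ : Type*} [Fintype ι]
    (Φ : Matrix ι ι ℂ →ₗ[ℂ] Matrix κ κ ℂ) : ℕ :=
  sInf {N : ℕ | ∃ E : Fin N → Matrix κ ι ℂ, ∀ A, Φ A = ∑ k, E k * A * (E k)ᴴ}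


namespace ChoiAux
set_option linter.unusedSectionVars false
open ComplexOrder

variable {ι κ : Type*} [Fintype ι] [Fintype κ] [DecidableEq ι] [DecidableEq κ]

/-- The Choi matrix of a linear map. -/
def choi (Φ : Matrix ι ι ℂ →ₗ[ℂ] Matrix κ κ ℂ) : Matrix (ι × κ) (ι × κ) ℂ :=
  Matrix.of fun x y => Φ (Matrix.single x.1 y.1 1) x.2 y.2

lemma choi_apply (Φ : Matrix ι ι ℂ →ₗ[ℂ] Matrix κ κ ℂ) (i j : ι) (a b : κ) :
    choi Φ (i, a) (j, b) = Φ (Matrix.single i j 1) a b := rfl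

lemma apply_eq (Φ : Matrix ι ι ℂ →ₗ[ℂ] Matrix κ κ ℂ) (A : Matrix ι ι ℂ) :
    Φ A = ∑ i, ∑ j, A i j • Φ (Matrix.single i j 1) := by
  conv_lhs => rw [matrix_eq_sum_single A]
  rw [map_sum]
  refine Finset.sum_congr rfl fun i _ => ?_
  rw [map_sum]
  refine Finset.sum_congr rfl fun j _ => ?_
  have h : Matrix.single i j (A i j) = A i j • Matrix.single i j (1:ℂ) := by
    rw [smul_single, smul_eq_mul, mul_one]
  rw [h, _root_.map_smul]

lemma apply_entry (Φ : Matrix ι ι ℂ →ₗ[ℂ] Matrix κ κ ℂ) (A : Matrix ι ι ℂ) (a b : κ) :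
    Φ A a b = ∑ i, ∑ j, A i j * choi Φ (i, a) (j, b) := by
  rw [apply_eq Φ A]
  simp [Matrix.sum_apply, choi_apply]

lemma choi_inj {Φ Ψ : Matrix ι ι ℂ →ₗ[ℂ] Matrix κ κ ℂ} (h : choi Φ = choi Ψ) : Φ = Ψ := by
  ext A a b
  rw [apply_entry, apply_entry, h]

lemma choi_add (Φ Ψ : Matrix ι ι ℂ →ₗ[ℂ] Matrix κ κ ℂ) :
    choi (Φ + Ψ) = choi Φ + choi Ψ := rfl

lemma choi_sub (Φ Ψ : Matrix ι ι ℂ →ₗ[ℂ] Matrix κ κ ℂ) :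
    choi (Φ - Ψ) = choi Φ - choi Ψ := rfl

lemma choi_realSmul (r : ℝ) (Φ : Matrix ι ι ℂ →ₗ[ℂ] Matrix κ κ ℂ) :
    choi (r • Φ) = r • choi Φ := rfl

/-- Partial trace over the second factor. -/
noncomputable def ptr (C : Matrix (ι × κ) (ι × κ) ℂ) : Matrix ι ι ℂ :=
  Matrix.of fun i j => ∑ a, C (i, a) (j, a)

lemma ptr_apply (C : Matrix (ι × κ) (ι × κ) ℂ) (i j : ι) :
    ptr C i j = ∑ a, C (i, a) (j, a) := rfl

lemma ptr_sub (C D : Matrix (ι × κ) (ι × κ) ℂ) : ptr (C - D) = ptr C - ptr D := by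
  ext i j
  simp [ptr, Finset.sum_sub_distrib]

lemma trace_eq_sum (A : Matrix κ κ ℂ) : A.trace = ∑ a, A a a := rfl

lemma trace_std (i j : ι) : (Matrix.single i j (1:ℂ)).trace = if i = j then 1 else 0 := by
  rcases eq_or_ne i j with rfl | h
  · simp [trace_eq_sum, Matrix.single, Finset.sum_ite_eq]
  · simp only [trace_eq_sum, Matrix.single, Matrix.of_apply, if_neg h]
    refine Finset.sum_eq_zero fun k _ => ?_
    by_cases hik : i = k
    · subst hik; simp [Ne.symm h]
    · simp [hik]

lemma isTP_iff (Φ : Matrix ι ι ℂ →ₗ[ℂ] Matrix κ κ ℂ) : IsTP Φ ↔ ptr (choi Φ) = 1 := by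
  constructor
  · intro h
    ext i j
    have := h (Matrix.single i j 1)
    rw [trace_std] at this
    rw [Matrix.one_apply, ← this, trace_eq_sum]
    rfl
  · intro h A
    have hA : (Φ A).trace = ∑ i, ∑ j, A i j * ptr (choi Φ) i j := by
      rw [trace_eq_sum]
      calc ∑ a, Φ A a a = ∑ a, ∑ i, ∑ j, A i j * choi Φ (i,a) (j,a) :=
            Finset.sum_congr rfl fun a _ => apply_entry Φ A a a
        _ = ∑ i, ∑ a, ∑ j, A i j * choi Φ (i,a) (j,a) := Finset.sum_comm
        _ = ∑ i, ∑ j, ∑ a, A i j * choi Φ (i,a) (j,a) :=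
            Finset.sum_congr rfl fun i _ => Finset.sum_comm
        _ = ∑ i, ∑ j, A i j * ptr (choi Φ) i j := by
            refine Finset.sum_congr rfl fun i _ => Finset.sum_congr rfl fun j _ => ?_
            rw [ptr_apply, Finset.mul_sum]
    rw [hA, h, trace_eq_sum]
    simp [Matrix.one_apply, Finset.sum_ite_eq]

lemma mul_mul_conjTranspose_apply (E : Matrix κ ι ℂ) (A : Matrix ι ι ℂ) (F : Matrix κ ι ℂ)
    (a b : κ) : (E * A * Fᴴ) a b = ∑ i, ∑ j, E a i * A i j * star (F b j) :=
  calc (E * A * Fᴴ) a b = ∑ q, (∑ p, E a p * A p q) * star (F b q) := by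
        rw [Matrix.mul_apply]
        exact Finset.sum_congr rfl fun q _ => by rw [Matrix.mul_apply, Matrix.conjTranspose_apply]
    _ = ∑ q, ∑ p, E a p * A p q * star (F b q) :=
        Finset.sum_congr rfl fun q _ => Finset.sum_mul _ _ _
    _ = ∑ p, ∑ q, E a p * A p q * star (F b q) := Finset.sum_comm

lemma mul_std_mul (E F : Matrix κ ι ℂ) (i j : ι) (a b : κ) :
    (E * Matrix.single i j (1:ℂ) * Fᴴ) a b = E a i * star (F b j) := by
  rw [mul_mul_conjTranspose_apply]
  simp [Matrix.single, ite_and, mul_ite, ite_mul, Finset.sum_ite_eq]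

lemma isCP_choi_psd (Φ : Matrix ι ι ℂ →ₗ[ℂ] Matrix κ κ ℂ) (h : IsCP Φ) :
    (choi Φ).PosSemidef := by
  obtain ⟨N, E, hE⟩ := h
  have hchoi : choi Φ = (Matrix.of fun (x : ι × κ) (k : Fin N) => E k x.2 x.1) *
      (Matrix.of fun (x : ι × κ) (k : Fin N) => E k x.2 x.1)ᴴ := by
    ext x y
    rw [show x = (x.1, x.2) from rfl, show y = (y.1, y.2) from rfl, choi_apply, hE,
      Matrix.sum_apply, Matrix.mul_apply]
    exact Finset.sum_congr rfl fun k _ => by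
      rw [mul_std_mul, Matrix.conjTranspose_apply]; rfl
  rw [hchoi]
  exact Matrix.posSemidef_self_mul_conjTranspose _

/-- The linear map with a given Choi matrix. -/
noncomputable def ofChoi (C : Matrix (ι × κ) (ι × κ) ℂ) : Matrix ι ι ℂ →ₗ[ℂ] Matrix κ κ ℂ where
  toFun A := Matrix.of fun a b => ∑ i, ∑ j, A i j * C (i, a) (j, b)
  map_add' A B := by
    ext a b
    simp [add_mul, Finset.sum_add_distrib]
  map_smul' r A := by
    ext a b
    simp [Finset.mul_sum, mul_assoc]

lemma choi_ofChoi (C : Matrix (ι × κ) (ι × κ) ℂ) : choi (ofChoi C) = C := by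
  ext x y
  rw [show x = (x.1, x.2) from rfl, show y = (y.1, y.2) from rfl, choi_apply]
  show (∑ i, ∑ j, (Matrix.single x.1 y.1 (1:ℂ)) i j * C (i, x.2) (j, y.2)) = _
  simp [Matrix.single, ite_and, ite_mul, Finset.sum_ite_eq]

lemma ofChoi_apply (C : Matrix (ι × κ) (ι × κ) ℂ) (A : Matrix ι ι ℂ) (a b : κ) :
    ofChoi C A a b = ∑ i, ∑ j, A i j * C (i, a) (j, b) := rfl

lemma isCP_of_psd (C : Matrix (ι × κ) (ι × κ) ℂ) (h : C.PosSemidef) : IsCP (ofChoi C) := by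
  obtain ⟨B, hB⟩ : ∃ B : Matrix (ι × κ) (ι × κ) ℂ, C = Bᴴ * B := by
    open scoped MatrixOrder in exact (CStarAlgebra.nonneg_iff_eq_star_mul_self.mp h.nonneg).imp (fun B hB => by rwa [← Matrix.star_eq_conjTranspose])
  set e := Fintype.equivFin (ι × κ) with he
  set Ek : Fin (Fintype.card (ι × κ)) → Matrix κ ι ℂ :=
    fun k => Matrix.of fun a i => star (B (e.symm k) (i, a)) with hEk
  refine ⟨Fintype.card (ι × κ), Ek, fun A => ?_⟩
  ext a b
  rw [Matrix.sum_apply, ofChoi_apply]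
  symm
  calc ∑ k, (Ek k * A * (Ek k)ᴴ) a b
      = ∑ k, ∑ i, ∑ j, star (B (e.symm k) (i, a)) * A i j * B (e.symm k) (j, b) := by
        refine Finset.sum_congr rfl fun k _ => ?_
        rw [mul_mul_conjTranspose_apply]
        exact Finset.sum_congr rfl fun i _ => Finset.sum_congr rfl fun j _ => by
          simp [hEk]
    _ = ∑ x : ι × κ, ∑ i, ∑ j, star (B x (i, a)) * A i j * B x (j, b) :=
        e.symm.sum_comp (fun x => ∑ i, ∑ j, star (B x (i, a)) * A i j * B x (j, b))
    _ = ∑ i, ∑ j, ∑ x : ι × κ, star (B x (i, a)) * A i j * B x (j, b) := by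
        rw [Finset.sum_comm]
        exact Finset.sum_congr rfl fun i _ => Finset.sum_comm
    _ = ∑ i, ∑ j, A i j * C (i, a) (j, b) := by
        refine Finset.sum_congr rfl fun i _ => Finset.sum_congr rfl fun j _ => ?_
        rw [hB, Matrix.mul_apply, Finset.mul_sum]
        exact Finset.sum_congr rfl fun x _ => by
          rw [Matrix.conjTranspose_apply]; ring

lemma ptr_add (C D : Matrix (ι × κ) (ι × κ) ℂ) : ptr (C + D) = ptr C + ptr D := by
  ext i j
  simp [ptr, Finset.sum_add_distrib]

universe uu

lemma exists_decomp {N : Type uu} [Fintype N] [DecidableEq N] {C : Matrix N N ℂ}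
    (hC : C.PosSemidef) :
    ∃ (S : Type uu) (_ : Fintype S) (_ : DecidableEq S) (V : Matrix N S ℂ) (d : S → ℂ),
      C = V * Vᴴ ∧ Vᴴ * V = Matrix.diagonal d ∧ ∀ s, d s ≠ 0 := by
  have hH := hC.1
  set lam := hH.eigenvalues with hlam
  set Q : Matrix N N ℂ := (hH.eigenvectorUnitary : Matrix N N ℂ) with hQ
  have hQunit : Qᴴ * Q = 1 := by
    rw [hQ, ← Matrix.star_eq_conjTranspose]
    exact Matrix.UnitaryGroup.star_mul_self _
  refine ⟨{k : N // lam k ≠ 0}, inferInstance, inferInstance,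
    Matrix.of fun x s => ((Real.sqrt (lam s.1) : ℝ) : ℂ) * Q x s.1,
    fun s => ((lam s.1 : ℝ) : ℂ), ?_, ?_, ?_⟩
  · ext x y
    have hspec : C x y = ∑ k, (lam k : ℂ) * (Q x k * star (Q y k)) := by
      conv_lhs => rw [hC.1.spectral_theorem, Unitary.conjStarAlgAut_apply]
      rw [Matrix.star_eq_conjTranspose, mul_mul_conjTranspose_apply]
      rw [← hQ, ← hlam]
      refine Finset.sum_congr rfl fun p _ => ?_
      rw [Finset.sum_eq_single p]
      · simp [Matrix.diagonal_apply_eq]; ring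
      · intro q _ hq
        simp [Matrix.diagonal_apply_ne' _ hq]
      · simp
    rw [hspec, Matrix.mul_apply]
    rw [← Finset.sum_filter_of_ne
      (p := fun k => lam k ≠ 0) (fun k _ hk hlk => hk (by simp [hlk]))]
    rw [Finset.sum_subtype (p := fun k => lam k ≠ 0) (Finset.univ.filter fun k => lam k ≠ 0)
      (by simp) (fun k => (lam k : ℂ) * (Q x k * star (Q y k)))]
    refine Finset.sum_congr rfl fun s _ => ?_
    rw [Matrix.conjTranspose_apply]
    simp only [Matrix.of_apply]
    have hsq : ((Real.sqrt (lam s.1) : ℝ) : ℂ) * ((Real.sqrt (lam s.1) : ℝ) : ℂ) = (lam s.1 : ℂ) := by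
      rw [← Complex.ofReal_mul, Real.mul_self_sqrt (hC.eigenvalues_nonneg s.1)]
    have hst : star (((Real.sqrt (lam s.1) : ℝ) : ℂ) * Q y s.1)
        = ((Real.sqrt (lam s.1) : ℝ) : ℂ) * star (Q y s.1) := by
      rw [star_mul']
      rw [show star (((Real.sqrt (lam s.1) : ℝ) : ℂ)) = ((Real.sqrt (lam s.1) : ℝ) : ℂ) from
        Complex.conj_ofReal _]
      try ring
    rw [hst, ← hsq]
    try ring
  · ext s t
    rw [Matrix.mul_apply, Matrix.diagonal_apply]
    have : ∀ x, ((Matrix.of fun x s => ((Real.sqrt (lam s.1) : ℝ) : ℂ) * Q x s.1)ᴴ) s x *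
        (Matrix.of fun x s => ((Real.sqrt (lam s.1) : ℝ) : ℂ) * Q x s.1) x t
        = ((Real.sqrt (lam s.1) : ℝ) : ℂ) * ((Real.sqrt (lam t.1) : ℝ) : ℂ) *
          (star (Q x s.1) * Q x t.1) := by
      intro x
      rw [Matrix.conjTranspose_apply]
      simp only [Matrix.of_apply]
      rw [star_mul', Complex.star_def, Complex.conj_ofReal]
      ring
    rw [Finset.sum_congr rfl fun x _ => this x, ← Finset.mul_sum]
    have hQQ : ∑ x, star (Q x s.1) * Q x t.1 = if (s.1 : N) = t.1 then 1 else 0 := by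
      have := congrFun (congrFun hQunit s.1) t.1
      rw [Matrix.mul_apply] at this
      simpa [Matrix.conjTranspose_apply, Matrix.one_apply] using this
    rw [hQQ]
    by_cases hst : s = t
    · subst hst
      simp only [if_pos rfl, mul_one]
      rw [← Complex.ofReal_mul, Real.mul_self_sqrt (hC.eigenvalues_nonneg s.1)]
      try simp [hlam]
    · have hst' : (s.1 : N) ≠ t.1 := fun h => hst (Subtype.ext h)
      rw [if_neg hst', if_neg hst, mul_zero]
  · intro s
    exact Complex.ofReal_ne_zero.mpr s.2

lemma sandwich_eq_zero {N S : Type*} [Fintype N] [Fintype S] [DecidableEq S]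
    {V : Matrix N S ℂ} {d : S → ℂ} (hG : Vᴴ * V = Matrix.diagonal d) (hd : ∀ s, d s ≠ 0)
    {c : Matrix S S ℂ} (h : V * c * Vᴴ = 0) : c = 0 := by
  have h2 : (Vᴴ * V) * c * (Vᴴ * V) = 0 := by
    calc (Vᴴ * V) * c * (Vᴴ * V) = Vᴴ * (V * c * Vᴴ) * V := by
          simp only [Matrix.mul_assoc]
      _ = 0 := by rw [h, Matrix.mul_zero, Matrix.zero_mul]
  rw [hG] at h2
  ext s t
  have h3 := congrFun (congrFun h2 s) t
  rw [Matrix.mul_diagonal, Matrix.diagonal_mul] at h3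
  simp only [Matrix.zero_apply] at h3 ⊢
  have := mul_eq_zero.mp h3
  rcases this with h4 | h4
  · rcases mul_eq_zero.mp h4 with h5 | h5
    · exact absurd h5 (hd s)
    · exact h5
  · exact absurd h4 (hd t)

/-- The partial traces of outer products of columns. -/
noncomputable def Mmat {S : Type*} (V : Matrix (ι × κ) S ℂ) (s t : S) : Matrix ι ι ℂ :=
  Matrix.of fun i j => ∑ a, V (i, a) s * star (V (j, a) t)

lemma ptr_sandwich {S : Type*} [Fintype S] [DecidableEq S] (V : Matrix (ι × κ) S ℂ) (c : Matrix S S ℂ) :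
    ptr (V * c * Vᴴ) = ∑ s, ∑ t, c s t • Mmat V s t := by
  ext i j
  rw [Matrix.sum_apply]
  have hR : ∀ s, (∑ t, c s t • Mmat V s t) i j = ∑ t, c s t * ∑ a, V (i, a) s * star (V (j, a) t) := by
    intro s
    rw [Matrix.sum_apply]
    exact Finset.sum_congr rfl fun t _ => rfl
  rw [Finset.sum_congr rfl fun s _ => hR s]
  rw [ptr_apply]
  calc ∑ a, (V * c * Vᴴ) (i, a) (j, a)
      = ∑ a, ∑ s, ∑ t, V (i, a) s * c s t * star (V (j, a) t) :=
        Finset.sum_congr rfl fun a _ => mul_mul_conjTranspose_apply V c V (i, a) (j, a)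
    _ = ∑ s, ∑ a, ∑ t, V (i, a) s * c s t * star (V (j, a) t) := Finset.sum_comm
    _ = ∑ s, ∑ t, ∑ a, V (i, a) s * c s t * star (V (j, a) t) :=
        Finset.sum_congr rfl fun s _ => Finset.sum_comm
    _ = ∑ s, ∑ t, c s t * ∑ a, V (i, a) s * star (V (j, a) t) := by
        refine Finset.sum_congr rfl fun s _ => Finset.sum_congr rfl fun t _ => ?_
        rw [Finset.mul_sum]
        exact Finset.sum_congr rfl fun a _ => by ring

lemma quad_form_identity {N S : Type*} [Fintype N] [Fintype S]
    (V : Matrix N S ℂ) (M : Matrix S S ℂ) (x : N → ℂ) :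
    star x ⬝ᵥ ((V * M * Vᴴ) *ᵥ x) = star (Vᴴ *ᵥ x) ⬝ᵥ (M *ᵥ (Vᴴ *ᵥ x)) := by
  rw [← Matrix.mulVec_mulVec, ← Matrix.mulVec_mulVec, Matrix.dotProduct_mulVec (star x) V,
    Matrix.star_mulVec, Matrix.conjTranspose_conjTranspose]

lemma psd_perturb {N S : Type*} [Fintype N] [Fintype S] [DecidableEq S] (V : Matrix N S ℂ) (f : Matrix S S ℂ)
    (hfH : fᴴ = f) (hf1 : (∑ s, ∑ t, ‖f s t‖) ≤ 1) :
    (V * Vᴴ + V * f * Vᴴ).PosSemidef := by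
  refine Matrix.PosSemidef.of_dotProduct_mulVec_nonneg ?_ ?_
  · show (V * Vᴴ + V * f * Vᴴ)ᴴ = _
    rw [Matrix.conjTranspose_add, Matrix.conjTranspose_mul, Matrix.conjTranspose_mul,
      Matrix.conjTranspose_mul, Matrix.conjTranspose_conjTranspose, hfH, Matrix.mul_assoc]
  · intro x
    set y := Vᴴ *ᵥ x with hy
    have h1 : star x ⬝ᵥ ((V * Vᴴ) *ᵥ x) = star y ⬝ᵥ y := by
      have := quad_form_identity V 1 x
      simpa using this
    have h2 : star x ⬝ᵥ ((V * f * Vᴴ) *ᵥ x) = star y ⬝ᵥ (f *ᵥ y) := quad_form_identity V f x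
    rw [Matrix.add_mulVec, dotProduct_add, h1, h2]
    set Y : ℝ := ∑ s, Complex.normSq (y s) with hYdef
    have hYnn : 0 ≤ Y := Finset.sum_nonneg fun s _ => Complex.normSq_nonneg _
    have hq1 : star y ⬝ᵥ y = (Y : ℂ) := by
      rw [dotProduct, hYdef, Complex.ofReal_sum]
      refine Finset.sum_congr rfl fun s _ => ?_
      rw [Pi.star_apply, Complex.star_def, ← Complex.normSq_eq_conj_mul_self]
    set q2 : ℂ := star y ⬝ᵥ (f *ᵥ y) with hq2def
    have hq2exp : q2 = ∑ s, ∑ t, star (y s) * f s t * y t := by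
      rw [hq2def, dotProduct]
      refine Finset.sum_congr rfl fun s _ => ?_
      rw [Matrix.mulVec, dotProduct, Finset.mul_sum]
      exact Finset.sum_congr rfl fun t _ => by rw [Pi.star_apply]; ring
    have hstarf : ∀ s t, star (f s t) = f t s := by
      intro s t
      have h7 := congrFun (congrFun hfH t) s
      rw [Matrix.conjTranspose_apply] at h7
      exact h7
    have hq2real : q2.im = 0 := by
      have : star q2 = q2 := by
        rw [hq2exp, star_sum]
        rw [Finset.sum_comm]
        refine Finset.sum_congr rfl fun s _ => ?_
        rw [star_sum]
        refine Finset.sum_congr rfl fun t _ => ?_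
        rw [star_mul', star_mul', star_star, hstarf]
        ring
      have := congrArg Complex.im this
      simp only [Complex.star_def, Complex.conj_im] at this
      linarith
    have hysq : ∀ s, ‖y s‖ * ‖y s‖ ≤ Y := by
      intro s
      have h0 : ‖y s‖ * ‖y s‖ = Complex.normSq (y s) := by
        rw [Complex.normSq_eq_norm_sq]; ring
      rw [h0]
      exact Finset.single_le_sum (f := fun s => Complex.normSq (y s))
        (fun s _ => Complex.normSq_nonneg _) (Finset.mem_univ s)
    have hprod : ∀ s t, ‖y s‖ * ‖y t‖ ≤ Y := by
      intro s t
      have hs := hysq s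
      have ht := hysq t
      nlinarith [norm_nonneg (y s), norm_nonneg (y t)]
    have hq2abs : ‖q2‖ ≤ Y := by
      rw [hq2exp]
      calc ‖∑ s, ∑ t, star (y s) * f s t * y t‖
          ≤ ∑ s, ‖∑ t, star (y s) * f s t * y t‖ := norm_sum_le _ _
        _ ≤ ∑ s, ∑ t, ‖star (y s) * f s t * y t‖ :=
            Finset.sum_le_sum fun s _ => norm_sum_le _ _
        _ = ∑ s, ∑ t, ‖f s t‖ * (‖y s‖ * ‖y t‖) := by
            refine Finset.sum_congr rfl fun s _ => Finset.sum_congr rfl fun t _ => ?_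
            rw [norm_mul, norm_mul]
            rw [show ‖star (y s)‖ = ‖y s‖ by
              simp [Complex.star_def, Complex.norm_conj]]
            ring
        _ ≤ ∑ s, ∑ t, ‖f s t‖ * Y := by
            refine Finset.sum_le_sum fun s _ => Finset.sum_le_sum fun t _ => ?_
            exact mul_le_mul_of_nonneg_left (hprod s t) (norm_nonneg _)
        _ = (∑ s, ∑ t, ‖f s t‖) * Y := by
            rw [Finset.sum_mul]
            exact Finset.sum_congr rfl fun s _ => (Finset.sum_mul _ _ _).symm
        _ ≤ 1 * Y := mul_le_mul_of_nonneg_right hf1 hYnn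
        _ = Y := one_mul Y
    rw [hq1]
    rw [Complex.le_def]
    constructor
    · simp only [Complex.add_re, Complex.ofReal_re, Complex.zero_re]
      have h5 : |q2.re| ≤ Y := le_trans (Complex.abs_re_le_norm q2) hq2abs
      have h6 := neg_le_of_abs_le h5
      linarith
    · simp [hq2real]

lemma indep_of_extreme {S : Type*} [Fintype S] [DecidableEq S]
    (ε : Matrix ι ι ℂ →ₗ[ℂ] Matrix κ κ ℂ)
    (hε : ε ∈ Set.extremePoints ℝ (CPTset ι κ))
    (V : Matrix (ι × κ) S ℂ) (d : S → ℂ)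
    (hCV : choi ε = V * Vᴴ) (hG : Vᴴ * V = Matrix.diagonal d) (hd : ∀ s, d s ≠ 0) :
    ∀ c : Matrix S S ℂ, (∑ s, ∑ t, c s t • Mmat V s t) = 0 → c = 0 := by
  intro c hc
  by_contra hc0
  have hMH : ∀ s t, (Mmat V s t)ᴴ = Mmat V t s := by
    intro s t
    ext i j
    rw [Matrix.conjTranspose_apply]
    show star (∑ a, V (j, a) s * star (V (i, a) t)) = ∑ a, V (i, a) t * star (V (j, a) s)
    rw [star_sum]
    exact Finset.sum_congr rfl fun a _ => by rw [star_mul', star_star]; ring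
  have hcH : (∑ s, ∑ t, cᴴ s t • Mmat V s t) = 0 := by
    have h0 := congrArg Matrix.conjTranspose hc
    rw [Matrix.conjTranspose_zero] at h0
    rw [← h0, Matrix.conjTranspose_sum, Finset.sum_comm]
    refine Finset.sum_congr rfl fun s _ => ?_
    rw [Matrix.conjTranspose_sum]
    refine Finset.sum_congr rfl fun t _ => ?_
    rw [Matrix.conjTranspose_smul, hMH]
    rfl
  obtain ⟨e, he0, heH, heA⟩ : ∃ e : Matrix S S ℂ, e ≠ 0 ∧ eᴴ = e ∧
      (∑ s, ∑ t, e s t • Mmat V s t) = 0 := by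
    by_cases h1 : c + cᴴ = 0
    · refine ⟨Complex.I • (c - cᴴ), ?_, ?_, ?_⟩
      · have hcc : c - cᴴ = c + c := by
          have : cᴴ = -c := by
            have := h1
            rw [add_comm] at this
            exact eq_neg_of_add_eq_zero_left this
          rw [this, sub_neg_eq_add]
        rw [hcc]
        intro hcon
        have h2 : c + c = 0 := by
          rcases smul_eq_zero.mp hcon with h3 | h3
          · exact absurd h3 Complex.I_ne_zero
          · exact h3
        apply hc0
        ext s t
        have h3 := congrFun (congrFun h2 s) t
        simp only [Matrix.add_apply, Matrix.zero_apply] at h3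
        exact add_self_eq_zero.mp h3
      · rw [Matrix.conjTranspose_smul, Matrix.conjTranspose_sub,
          Matrix.conjTranspose_conjTranspose]
        rw [show (star Complex.I) = -Complex.I from Complex.conj_I]
        rw [neg_smul, smul_sub, smul_sub, neg_sub]
      · calc ∑ s, ∑ t, (Complex.I • (c - cᴴ)) s t • Mmat V s t
            = Complex.I • ∑ s, ∑ t, ((c - cᴴ) s t) • Mmat V s t := by
              rw [Finset.smul_sum]
              refine Finset.sum_congr rfl fun s _ => ?_
              rw [Finset.smul_sum]
              refine Finset.sum_congr rfl fun t _ => ?_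
              rw [Matrix.smul_apply, smul_eq_mul, smul_smul]
          _ = Complex.I • ((∑ s, ∑ t, c s t • Mmat V s t)
                - (∑ s, ∑ t, cᴴ s t • Mmat V s t)) := by
              rw [← Finset.sum_sub_distrib]
              congr 1
              refine Finset.sum_congr rfl fun s _ => ?_
              rw [← Finset.sum_sub_distrib]
              refine Finset.sum_congr rfl fun t _ => ?_
              rw [Matrix.sub_apply, sub_smul]
          _ = 0 := by rw [hc, hcH, sub_zero, smul_zero]
    · refine ⟨c + cᴴ, h1, ?_, ?_⟩
      · rw [Matrix.conjTranspose_add, Matrix.conjTranspose_conjTranspose, add_comm]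
      · calc ∑ s, ∑ t, (c + cᴴ) s t • Mmat V s t
            = (∑ s, ∑ t, c s t • Mmat V s t) + (∑ s, ∑ t, cᴴ s t • Mmat V s t) := by
              rw [← Finset.sum_add_distrib]
              refine Finset.sum_congr rfl fun s _ => ?_
              rw [← Finset.sum_add_distrib]
              refine Finset.sum_congr rfl fun t _ => ?_
              rw [Matrix.add_apply, add_smul]
          _ = 0 := by rw [hc, hcH, add_zero]
  set r : ℝ := ∑ s, ∑ t, ‖e s t‖ with hr
  have hrnn : 0 ≤ r :=
    Finset.sum_nonneg fun s _ => Finset.sum_nonneg fun t _ => norm_nonneg _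
  have hrpos : 0 < r := by
    rcases hrnn.lt_or_eq with h | h
    · exact h
    · exfalso
      apply he0
      ext s t
      have h2 := (Finset.sum_eq_zero_iff_of_nonneg
        (fun s _ => Finset.sum_nonneg fun t _ => norm_nonneg (e s t))).mp h.symm s
        (Finset.mem_univ s)
      have h3 := (Finset.sum_eq_zero_iff_of_nonneg
        (fun t _ => norm_nonneg (e s t))).mp h2 t (Finset.mem_univ t)
      simpa using norm_eq_zero.mp h3
  set f : Matrix S S ℂ := ((r⁻¹ : ℝ) : ℂ) • e with hf
  have hf0 : f ≠ 0 := by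
    rw [hf]
    exact smul_ne_zero (Complex.ofReal_ne_zero.mpr (inv_ne_zero hrpos.ne')) he0
  have hfH : fᴴ = f := by
    rw [hf, Matrix.conjTranspose_smul, heH]
    congr 1
    exact Complex.conj_ofReal _
  have hfA : (∑ s, ∑ t, f s t • Mmat V s t) = 0 := by
    calc ∑ s, ∑ t, f s t • Mmat V s t
        = ((r⁻¹ : ℝ) : ℂ) • ∑ s, ∑ t, e s t • Mmat V s t := by
          rw [Finset.smul_sum]
          refine Finset.sum_congr rfl fun s _ => ?_
          rw [Finset.smul_sum]
          refine Finset.sum_congr rfl fun t _ => ?_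
          rw [hf, Matrix.smul_apply, smul_eq_mul, smul_smul]
      _ = 0 := by rw [heA, smul_zero]
  have hf1 : (∑ s, ∑ t, ‖f s t‖) ≤ 1 := by
    have : ∀ s t, ‖f s t‖ = r⁻¹ * ‖e s t‖ := by
      intro s t
      rw [hf, Matrix.smul_apply, smul_eq_mul, norm_mul, Complex.norm_real, Real.norm_eq_abs,
        abs_of_nonneg (inv_nonneg.mpr hrnn)]
    calc ∑ s, ∑ t, ‖f s t‖
        = r⁻¹ * r := by
          rw [hr, Finset.mul_sum]
          refine Finset.sum_congr rfl fun s _ => ?_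
          rw [Finset.mul_sum]
          exact Finset.sum_congr rfl fun t _ => this s t
      _ ≤ 1 := by rw [inv_mul_cancel₀ hrpos.ne']
  set D := V * f * Vᴴ with hD
  have hD0 : D ≠ 0 := fun h => hf0 (sandwich_eq_zero hG hd h)
  have hplus : (choi ε + D).PosSemidef := by
    rw [hCV, hD]
    exact psd_perturb V f hfH hf1
  have hminus : (choi ε - D).PosSemidef := by
    rw [hCV, hD]
    have h4 := psd_perturb V (-f) (by rw [Matrix.conjTranspose_neg, hfH]) (by simpa using hf1)
    have h5 : V * Vᴴ + V * (-f) * Vᴴ = V * Vᴴ - V * f * Vᴴ := by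
      rw [Matrix.mul_neg, Matrix.neg_mul, sub_eq_add_neg]
    rwa [h5] at h4
  have hptrD : ptr D = 0 := by rw [hD, ptr_sandwich, hfA]
  have hεC : ε ∈ CPTset ι κ := hε.1
  have hTPe : ptr (choi ε) = 1 := (isTP_iff ε).mp hεC.2
  set Φp := ofChoi (choi ε + D) with hΦp
  set Φm := ofChoi (choi ε - D) with hΦm
  have hmemp : Φp ∈ CPTset ι κ := ⟨isCP_of_psd _ hplus,
    (isTP_iff _).mpr (by rw [hΦp, choi_ofChoi, ptr_add, hTPe, hptrD, add_zero])⟩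
  have hmemm : Φm ∈ CPTset ι κ := ⟨isCP_of_psd _ hminus,
    (isTP_iff _).mpr (by rw [hΦm, choi_ofChoi, ptr_sub, hTPe, hptrD, sub_zero])⟩
  have hmid : (1/2 : ℝ) • Φp + (1/2 : ℝ) • Φm = ε := by
    apply choi_inj
    rw [choi_add, choi_realSmul, choi_realSmul, hΦp, hΦm, choi_ofChoi, choi_ofChoi, ← smul_add,
      show (choi ε + D) + (choi ε - D) = choi ε + choi ε by abel, ← two_smul ℝ, smul_smul]
    norm_num
  have hseg : ε ∈ openSegment ℝ Φp Φm :=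
    ⟨1/2, 1/2, by norm_num, by norm_num, by norm_num, hmid⟩
  have hp := hε.2 hmemp hmemm hseg
  have h6 : choi ε + D = choi ε := by
    rw [← choi_ofChoi (choi ε + D), ← hΦp, hp]
  exact hD0 (by rwa [add_eq_left] at h6)

lemma matrix_eq_of_mulVec {M N : Type*} [Fintype N] [DecidableEq N] {A B : Matrix M N ℂ}
    (h : ∀ x, A *ᵥ x = B *ᵥ x) : A = B := by
  ext i j
  have h1 := congrFun (h (Pi.single j 1)) i
  rw [Matrix.mulVec_single, Matrix.mulVec_single] at h1
  simpa using h1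

section Main

variable {ι' κ' : Type*} [Fintype ι'] [Fintype κ'] [DecidableEq ι'] [DecidableEq κ']

lemma std_kron (i j : ι) (i' j' : ι') :
    Matrix.single ((i, i') : ι × ι') ((j, j') : ι × ι') (1 : ℂ) =
      Matrix.single i j (1 : ℂ) ⊗ₖ Matrix.single i' j' (1 : ℂ) := by
  ext x y
  obtain ⟨p, p'⟩ := x
  obtain ⟨q, q'⟩ := y
  simp only [Matrix.single, Matrix.of_apply, Matrix.kroneckerMap_apply, Prod.mk.injEq]
  by_cases h1 : i = p ∧ j = q <;> by_cases h2 : i' = p' ∧ j' = q' <;>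
    simp [h1, h2] <;> tauto

lemma main_generic
    (ε : Matrix ι ι ℂ →ₗ[ℂ] Matrix κ κ ℂ) (ε' : Matrix ι' ι' ℂ →ₗ[ℂ] Matrix κ' κ' ℂ)
    (T : Matrix (ι × ι') (ι × ι') ℂ →ₗ[ℂ] Matrix (κ × κ') (κ × κ') ℂ)
    (hT : ∀ (A : Matrix ι ι ℂ) (B : Matrix ι' ι' ℂ), T (A ⊗ₖ B) = ε A ⊗ₖ ε' B)
    (hε : ε ∈ Set.extremePoints ℝ (CPTset ι κ))
    (hε' : ε' ∈ Set.extremePoints ℝ (CPTset ι' κ')) :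
    T ∈ Set.extremePoints ℝ (CPTset (ι × ι') (κ × κ')) := by
  have hTe : ∀ (i j : ι) (i' j' : ι') (a b : κ) (a' b' : κ'),
      choi T ((i, i'), (a, a')) ((j, j'), (b, b')) =
        choi ε (i, a) (j, b) * choi ε' (i', a') (j', b') := by
    intro i j i' j' a b a' b'
    rw [choi_apply, std_kron, hT]
    rfl
  -- Choi decompositions of the factors
  obtain ⟨S, hSf, hSd, V, d, hV, hGV, hdV⟩ := exists_decomp (isCP_choi_psd ε hε.1.1)
  obtain ⟨S', hSf', hSd', V', d', hV', hGV', hdV'⟩ := exists_decomp (isCP_choi_psd ε' hε'.1.1)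
  letI := hSf; letI := hSd; letI := hSf'; letI := hSd'
  set W : Matrix ((ι × ι') × (κ × κ')) (S × S') ℂ :=
    Matrix.of fun x st => V (x.1.1, x.2.1) st.1 * V' (x.1.2, x.2.2) st.2 with hW
  have hCT : choi T = W * Wᴴ := by
    ext x y
    calc choi T x y
        = (∑ s, V (x.1.1, x.2.1) s * star (V (y.1.1, y.2.1) s)) *
          (∑ s', V' (x.1.2, x.2.2) s' * star (V' (y.1.2, y.2.2) s')) := by
          rw [show choi T x y = choi ε (x.1.1, x.2.1) (y.1.1, y.2.1) *
              choi ε' (x.1.2, x.2.2) (y.1.2, y.2.2) from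
            hTe x.1.1 y.1.1 x.1.2 y.1.2 x.2.1 y.2.1 x.2.2 y.2.2]
          rw [hV, hV', Matrix.mul_apply, Matrix.mul_apply]
          congr 1 <;>
            exact Finset.sum_congr rfl fun s _ => by rw [Matrix.conjTranspose_apply]
      _ = ∑ s, ∑ s', (V (x.1.1, x.2.1) s * star (V (y.1.1, y.2.1) s)) *
            (V' (x.1.2, x.2.2) s' * star (V' (y.1.2, y.2.2) s')) :=
          Finset.sum_mul_sum _ _ _ _
      _ = (W * Wᴴ) x y := by
          rw [Matrix.mul_apply, Fintype.sum_prod_type]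
          refine Finset.sum_congr rfl fun s _ => Finset.sum_congr rfl fun s' _ => ?_
          rw [Matrix.conjTranspose_apply, hW]
          simp only [Matrix.of_apply]
          rw [star_mul']
          ring
  have hGW : Wᴴ * W = Matrix.diagonal (fun st : S × S' => d st.1 * d' st.2) := by
    ext st uv
    have hLHS : (Wᴴ * W) st uv =
        (∑ i, ∑ a, star (V (i, a) st.1) * V (i, a) uv.1) *
        (∑ i', ∑ a', star (V' (i', a') st.2) * V' (i', a') uv.2) := by
      rw [Matrix.mul_apply]
      calc ∑ x : (ι × ι') × (κ × κ'), (Wᴴ) st x * W x uv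
          = ∑ x : (ι × ι') × (κ × κ'), star (W x st) * W x uv :=
            Finset.sum_congr rfl fun x _ => by rw [Matrix.conjTranspose_apply]
        _ = ∑ p : ι × ι', ∑ q : κ × κ',
              (star (V (p.1, q.1) st.1) * V (p.1, q.1) uv.1) *
              (star (V' (p.2, q.2) st.2) * V' (p.2, q.2) uv.2) := by
            rw [Fintype.sum_prod_type]
            refine Finset.sum_congr rfl fun p _ => Finset.sum_congr rfl fun q _ => ?_
            rw [hW]
            simp only [Matrix.of_apply]
            rw [star_mul']
            ring
        _ = ∑ i, ∑ i', ∑ a, ∑ a',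
              (star (V (i, a) st.1) * V (i, a) uv.1) *
              (star (V' (i', a') st.2) * V' (i', a') uv.2) := by
            simp only [Fintype.sum_prod_type]
        _ = ∑ i, ∑ a, ∑ i', ∑ a',
              (star (V (i, a) st.1) * V (i, a) uv.1) *
              (star (V' (i', a') st.2) * V' (i', a') uv.2) :=
            Finset.sum_congr rfl fun i _ => Finset.sum_comm
        _ = (∑ i, ∑ a, star (V (i, a) st.1) * V (i, a) uv.1) *
            (∑ i', ∑ a', star (V' (i', a') st.2) * V' (i', a') uv.2) := by
            rw [Finset.sum_mul]
            refine Finset.sum_congr rfl fun i _ => ?_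
            rw [Finset.sum_mul]
            refine Finset.sum_congr rfl fun a _ => ?_
            rw [Finset.mul_sum]
            refine Finset.sum_congr rfl fun i' _ => ?_
            rw [Finset.mul_sum]
    have hVV : (Vᴴ * V) st.1 uv.1 = ∑ i, ∑ a, star (V (i, a) st.1) * V (i, a) uv.1 := by
      rw [Matrix.mul_apply, Fintype.sum_prod_type]
      exact Finset.sum_congr rfl fun i _ => Finset.sum_congr rfl fun a _ => by
        rw [Matrix.conjTranspose_apply]
    have hVV' : (V'ᴴ * V') st.2 uv.2 = ∑ i', ∑ a', star (V' (i', a') st.2) * V' (i', a') uv.2 := by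
      rw [Matrix.mul_apply, Fintype.sum_prod_type]
      exact Finset.sum_congr rfl fun i _ => Finset.sum_congr rfl fun a _ => by
        rw [Matrix.conjTranspose_apply]
    rw [hLHS, ← hVV, ← hVV', hGV, hGV']
    rcases eq_or_ne st uv with rfl | hne
    · rw [Matrix.diagonal_apply_eq, Matrix.diagonal_apply_eq, Matrix.diagonal_apply_eq]
    · rw [Matrix.diagonal_apply_ne _ hne]
      by_cases h1 : st.1 = uv.1
      · have h2 : st.2 ≠ uv.2 := fun h => hne (Prod.ext h1 h)
        rw [Matrix.diagonal_apply_ne _ h2, mul_zero]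
      · rw [Matrix.diagonal_apply_ne _ h1, zero_mul]
  have hdW : ∀ st : S × S', d st.1 * d' st.2 ≠ 0 := fun st => mul_ne_zero (hdV _) (hdV' _)
  -- T is a CPT map
  have hTP_T : ptr (choi T) = 1 := by
    ext p q
    rw [ptr_apply]
    calc ∑ aa' : κ × κ', choi T (p, aa') (q, aa')
        = ∑ a, ∑ a', choi ε (p.1, a) (q.1, a) * choi ε' (p.2, a') (q.2, a') := by
          rw [Fintype.sum_prod_type]
          exact Finset.sum_congr rfl fun a _ => Finset.sum_congr rfl fun a' _ =>
            hTe p.1 q.1 p.2 q.2 a a a' a'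
      _ = ptr (choi ε) p.1 q.1 * ptr (choi ε') p.2 q.2 := by
          rw [ptr_apply, ptr_apply]
          rw [Finset.sum_mul_sum]
      _ = (1 : Matrix ι ι ℂ) p.1 q.1 * (1 : Matrix ι' ι' ℂ) p.2 q.2 := by
          rw [(isTP_iff ε).mp hε.1.2, (isTP_iff ε').mp hε'.1.2]
      _ = (1 : Matrix (ι × ι') (ι × ι') ℂ) p q := by
          by_cases h1 : p.1 = q.1 <;> by_cases h2 : p.2 = q.2 <;>
            simp [Matrix.one_apply, Prod.ext_iff, h1, h2]
  have hTmem : T ∈ CPTset (ι × ι') (κ × κ') := by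
    constructor
    · have h3 : IsCP (ofChoi (choi T)) := isCP_of_psd _ (by
        rw [hCT]; exact Matrix.posSemidef_self_mul_conjTranspose _)
      rwa [choi_inj (choi_ofChoi (choi T)) ] at h3
    · exact (isTP_iff T).mpr hTP_T
  refine ⟨hTmem, ?_⟩
  intro Φ hΦ Ψ hΨ hseg
  obtain ⟨u, v, hu, hv, huv, hsum⟩ := hseg
  suffices hΦΨ : Φ = Ψ by
    rw [← hΦΨ] at hsum
    rw [← add_smul, huv, one_smul] at hsum
    exact hsum
  have hPSD1 : (choi Φ).PosSemidef := isCP_choi_psd Φ hΦ.1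
  have hPSD2 : (choi Ψ).PosSemidef := isCP_choi_psd Ψ hΨ.1
  have hsplit : choi T = u • choi Φ + v • choi Ψ := by
    rw [← hsum, choi_add, choi_realSmul, choi_realSmul]
  set D : Matrix ((ι × ι') × (κ × κ')) ((ι × ι') × (κ × κ')) ℂ := choi Φ - choi Ψ with hDdef
  have hker : ∀ x, Wᴴ *ᵥ x = 0 → D *ᵥ x = 0 := by
    intro x hx
    have hCx : choi T *ᵥ x = 0 := by
      rw [hCT, ← Matrix.mulVec_mulVec, hx, Matrix.mulVec_zero]
    have hq0 : (u : ℂ) * (star x ⬝ᵥ (choi Φ *ᵥ x)) + (v : ℂ) * (star x ⬝ᵥ (choi Ψ *ᵥ x)) = 0 := by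
      have h4 : star x ⬝ᵥ (choi T *ᵥ x) = 0 := by rw [hCx, dotProduct_zero]
      rw [hsplit, Matrix.add_mulVec, dotProduct_add, Matrix.smul_mulVec,
        Matrix.smul_mulVec, dotProduct_smul, dotProduct_smul] at h4
      rw [← h4]
      congr 1 <;> rw [Complex.real_smul]
    have h5 : (0:ℂ) ≤ (u : ℂ) * (star x ⬝ᵥ (choi Φ *ᵥ x)) :=
      mul_nonneg (Complex.zero_le_real.mpr hu.le) (hPSD1.dotProduct_mulVec_nonneg x)
    have h6 : (0:ℂ) ≤ (v : ℂ) * (star x ⬝ᵥ (choi Ψ *ᵥ x)) :=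
      mul_nonneg (Complex.zero_le_real.mpr hv.le) (hPSD2.dotProduct_mulVec_nonneg x)
    obtain ⟨h7, h8⟩ := (add_eq_zero_iff_of_nonneg h5 h6).mp hq0
    have h9 : star x ⬝ᵥ (choi Φ *ᵥ x) = 0 := by
      rcases mul_eq_zero.mp h7 with h | h
      · exact absurd h (by exact_mod_cast hu.ne')
      · exact h
    have h10 : star x ⬝ᵥ (choi Ψ *ᵥ x) = 0 := by
      rcases mul_eq_zero.mp h8 with h | h
      · exact absurd h (by exact_mod_cast hv.ne')
      · exact h
    rw [hDdef, Matrix.sub_mulVec, (hPSD1.dotProduct_mulVec_zero_iff x).mp h9,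
      (hPSD2.dotProduct_mulVec_zero_iff x).mp h10, sub_self]
  have hDH : Dᴴ = D := by rw [hDdef, Matrix.conjTranspose_sub, hPSD1.1, hPSD2.1]
  set dinv : S × S' → ℂ := fun st => (d st.1 * d' st.2)⁻¹ with hdinv
  set P := W * Matrix.diagonal dinv * Wᴴ with hP
  have hdiag1 : Matrix.diagonal (fun st : S × S' => d st.1 * d' st.2) * Matrix.diagonal dinv
      = 1 := by
    rw [Matrix.diagonal_mul_diagonal]
    have : (fun st : S × S' => (d st.1 * d' st.2) * dinv st) = fun _ => 1 := by
      funext st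
      rw [hdinv]
      exact mul_inv_cancel₀ (hdW st)
    rw [this, Matrix.diagonal_one]
  have hWP : ∀ x, Wᴴ *ᵥ (x - P *ᵥ x) = 0 := by
    intro x
    rw [Matrix.mulVec_sub]
    have h11 : Wᴴ *ᵥ (P *ᵥ x) = Wᴴ *ᵥ x := by
      rw [hP, Matrix.mulVec_mulVec]
      have h12 : Wᴴ * (W * Matrix.diagonal dinv * Wᴴ) = Wᴴ := by
        calc Wᴴ * (W * Matrix.diagonal dinv * Wᴴ)
            = (Wᴴ * W) * Matrix.diagonal dinv * Wᴴ := by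
              simp only [Matrix.mul_assoc]
          _ = Wᴴ := by rw [hGW, hdiag1, Matrix.one_mul]
      rw [h12]
    rw [h11, sub_self]
  have hDP : D = D * P := by
    apply matrix_eq_of_mulVec
    intro x
    have h13 : D *ᵥ (x - P *ᵥ x) = 0 := hker _ (hWP x)
    rw [Matrix.mulVec_sub, sub_eq_zero] at h13
    rw [h13, Matrix.mulVec_mulVec]
  have hdinv_real : ∀ st, star (dinv st) = dinv st := by
    intro st
    have h14 : (Wᴴ * W)ᴴ = Wᴴ * W := by
      rw [Matrix.conjTranspose_mul, Matrix.conjTranspose_conjTranspose]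
    rw [hGW] at h14
    have h15 := congrFun (congrFun h14 st) st
    simp only [Matrix.conjTranspose_apply, Matrix.diagonal_apply_eq] at h15
    rw [hdinv]
    dsimp only
    rw [star_inv₀, h15]
  have hPH : Pᴴ = P := by
    have h16 : Pᴴ = W * (Matrix.diagonal dinv)ᴴ * Wᴴ := by
      rw [hP, Matrix.conjTranspose_mul, Matrix.conjTranspose_mul,
        Matrix.conjTranspose_conjTranspose]
      simp only [Matrix.mul_assoc]
    rw [h16, Matrix.diagonal_conjTranspose]
    have h17 : star dinv = dinv := funext hdinv_real
    rw [h17]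
  have hPD : D = P * D := by
    calc D = Dᴴ := hDH.symm
      _ = (D * P)ᴴ := by rw [← hDP]
      _ = Pᴴ * Dᴴ := Matrix.conjTranspose_mul _ _
      _ = P * D := by rw [hPH, hDH]
  set Amat : Matrix (S × S') (S × S') ℂ :=
    Matrix.diagonal dinv * Wᴴ * D * W * Matrix.diagonal dinv with hAmat
  have hDW : D = W * Amat * Wᴴ := by
    calc D = P * (D * P) := by rw [← hDP, ← hPD]
      _ = W * Amat * Wᴴ := by
          rw [hP, hAmat]
          simp only [Matrix.mul_assoc]
  have hptrD : ptr D = 0 := by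
    rw [hDdef, ptr_sub, (isTP_iff Φ).mp hΦ.2, (isTP_iff Ψ).mp hΨ.2, sub_self]
  have hexp : (∑ st : S × S', ∑ uv : S × S', Amat st uv • Mmat W st uv) = 0 := by
    rw [← ptr_sandwich, ← hDW]
    exact hptrD
  have hMW : ∀ (st uv : S × S') (i j : ι) (i' j' : ι'),
      Mmat W st uv (i, i') (j, j') = Mmat V st.1 uv.1 i j * Mmat V' st.2 uv.2 i' j' := by
    intro st uv i j i' j'
    show (∑ q : κ × κ', W ((i, i'), q) st * star (W ((j, j'), q) uv)) = _
    rw [Fintype.sum_prod_type]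
    calc ∑ a, ∑ a', W ((i, i'), (a, a')) st * star (W ((j, j'), (a, a')) uv)
        = ∑ a, ∑ a', (V (i, a) st.1 * star (V (j, a) uv.1)) *
            (V' (i', a') st.2 * star (V' (j', a') uv.2)) := by
          refine Finset.sum_congr rfl fun a _ => Finset.sum_congr rfl fun a' _ => ?_
          rw [hW]
          simp only [Matrix.of_apply]
          rw [star_mul']
          ring
      _ = (∑ a, V (i, a) st.1 * star (V (j, a) uv.1)) *
          (∑ a', V' (i', a') st.2 * star (V' (j', a') uv.2)) :=
          (Finset.sum_mul_sum _ _ _ _).symm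
      _ = _ := rfl
  have hindV := indep_of_extreme ε hε V d hV hGV hdV
  have hindV' := indep_of_extreme ε' hε' V' d' hV' hGV' hdV'
  have hentry : ∀ (i j : ι) (i' j' : ι'),
      (∑ s, ∑ s', ∑ t, ∑ t', Amat (s, s') (t, t') *
        (Mmat V s t i j * Mmat V' s' t' i' j')) = 0 := by
    intro i j i' j'
    have h18 : (∑ st : S × S', ∑ uv : S × S', Amat st uv • Mmat W st uv) (i, i') (j, j') = 0 := by
      rw [hexp, Matrix.zero_apply]
    rw [Matrix.sum_apply] at h18
    have h19 : ∀ st : S × S', (∑ uv : S × S', Amat st uv • Mmat W st uv) (i, i') (j, j')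
        = ∑ uv : S × S', Amat st uv * (Mmat V st.1 uv.1 i j * Mmat V' st.2 uv.2 i' j') := by
      intro st
      rw [Matrix.sum_apply]
      refine Finset.sum_congr rfl fun uv _ => ?_
      rw [Matrix.smul_apply, smul_eq_mul, hMW]
    rw [Finset.sum_congr rfl fun st _ => h19 st] at h18
    rw [← h18]
    simp only [Fintype.sum_prod_type]
  have hstep1 : ∀ (i' j' : ι'), (Matrix.of fun s t =>
      ∑ s', ∑ t', Amat (s, s') (t, t') * Mmat V' s' t' i' j') = (0 : Matrix S S ℂ) := by
    intro i' j'
    apply hindV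
    ext i j
    rw [Matrix.sum_apply, Matrix.zero_apply]
    have h20 : ∀ s, (∑ t, (Matrix.of fun s t =>
        ∑ s', ∑ t', Amat (s, s') (t, t') * Mmat V' s' t' i' j') s t • Mmat V s t) i j
        = ∑ t, ∑ s', ∑ t', Amat (s, s') (t, t') * Mmat V' s' t' i' j' * Mmat V s t i j := by
      intro s
      rw [Matrix.sum_apply]
      refine Finset.sum_congr rfl fun t _ => ?_
      rw [Matrix.smul_apply, smul_eq_mul, Matrix.of_apply, Finset.sum_mul]
      exact Finset.sum_congr rfl fun s' _ => Finset.sum_mul _ _ _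
    rw [Finset.sum_congr rfl fun s _ => h20 s]
    calc ∑ s, ∑ t, ∑ s', ∑ t', Amat (s, s') (t, t') * Mmat V' s' t' i' j' * Mmat V s t i j
        = ∑ s, ∑ s', ∑ t, ∑ t', Amat (s, s') (t, t') *
            (Mmat V s t i j * Mmat V' s' t' i' j') := by
          refine Finset.sum_congr rfl fun s _ => ?_
          rw [Finset.sum_comm]
          exact Finset.sum_congr rfl fun s' _ => Finset.sum_congr rfl fun t _ =>
            Finset.sum_congr rfl fun t' _ => by ring
      _ = 0 := hentry i j i' j'
  have hA0 : Amat = 0 := by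
    ext st uv
    have h21 : (Matrix.of fun s' t' => Amat (st.1, s') (uv.1, t')) = (0 : Matrix S' S' ℂ) := by
      apply hindV'
      ext i' j'
      rw [Matrix.sum_apply, Matrix.zero_apply]
      have h22 : ∀ s', (∑ t', (Matrix.of fun s' t' => Amat (st.1, s') (uv.1, t')) s' t' •
          Mmat V' s' t') i' j'
          = ∑ t', Amat (st.1, s') (uv.1, t') * Mmat V' s' t' i' j' := by
        intro s'
        rw [Matrix.sum_apply]
        exact Finset.sum_congr rfl fun t' _ => by
          rw [Matrix.smul_apply, smul_eq_mul, Matrix.of_apply]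
      rw [Finset.sum_congr rfl fun s' _ => h22 s']
      have h23 := congrFun (congrFun (hstep1 i' j') st.1) uv.1
      simpa using h23
    have h24 := congrFun (congrFun h21 st.2) uv.2
    simpa using h24
  have hD0 : D = 0 := by
    rw [hDW, hA0, Matrix.mul_zero, Matrix.zero_mul]
  exact choi_inj (sub_eq_zero.mp (hDdef ▸ hD0))

end Main


end ChoiAux

/-- the tensor product (w.r.t. the Kronecker-product identification) of
extreme points of the convex sets of CPT maps is an extreme point of the CPT maps. -/
theorem tensor_of_extreme_CPT_is_extreme {n m n' m' : ℕ}
    (ε : Matrix (Fin n) (Fin n) ℂ →ₗ[ℂ] Matrix (Fin m) (Fin m) ℂ)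
    (ε' : Matrix (Fin n') (Fin n') ℂ →ₗ[ℂ] Matrix (Fin m') (Fin m') ℂ)
    (T : Matrix (Fin n × Fin n') (Fin n × Fin n') ℂ →ₗ[ℂ]
      Matrix (Fin m × Fin m') (Fin m × Fin m') ℂ)
    (hT : ∀ (A : Matrix (Fin n) (Fin n) ℂ) (B : Matrix (Fin n') (Fin n') ℂ),
      T (A ⊗ₖ B) = ε A ⊗ₖ ε' B)
    (hε : ε ∈ Set.extremePoints ℝ (CPTset (Fin n) (Fin m)))
    (hε' : ε' ∈ Set.extremePoints ℝ (CPTset (Fin n') (Fin m'))) :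
    T ∈ Set.extremePoints ℝ (CPTset (Fin n × Fin n') (Fin m × Fin m')) :=
  ChoiAux.main_generic ε ε' T hT hε hε'
end

section
/- If ε is an extreme point of UCPT(n), then its Choi rank satisfies CR(ε)² ≤ 2·n², i.e. CR(ε) ≤ √2·n. -/
open Matrix Kronecker

section Aux

open Complex
open scoped ComplexOrder

lemma kraus_comb {n r N : ℕ} (E : Fin r → Matrix (Fin n) (Fin n) ℂ)
    (B : Matrix (Fin N) (Fin r) ℂ) (A : Matrix (Fin n) (Fin n) ℂ) :
    ∑ k : Fin N, (∑ i, B k i • E i) * A * (∑ i, B k i • E i)ᴴ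
      = ∑ i, ∑ j, (Bᴴ * B) j i • (E i * A * (E j)ᴴ) := by
  simp only [conjTranspose_sum, conjTranspose_smul, Finset.sum_mul, Finset.mul_sum,
    smul_mul_assoc, mul_smul_comm, smul_smul, Matrix.mul_apply, conjTranspose_apply,
    Finset.smul_sum, Finset.sum_smul]
  conv_rhs => rw [Finset.sum_comm]
  rw [Finset.sum_comm]
  refine Finset.sum_congr rfl fun j _ => ?_
  rw [Finset.sum_comm]

lemma onb_matrix_unitary {N : ℕ} (b : OrthonormalBasis (Fin N) ℂ (EuclideanSpace ℂ (Fin N))) :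
    ((Matrix.of fun k i => b k i)ᴴ * (Matrix.of fun k i => b k i) : Matrix (Fin N) (Fin N) ℂ)
      = 1 := by
  ext j i
  have h := b.sum_inner_mul_inner (EuclideanSpace.single i (1:ℂ)) (EuclideanSpace.single j (1:ℂ))
  simp only [EuclideanSpace.inner_single_left, EuclideanSpace.inner_single_right,
    _root_.map_one, one_mul, mul_one, EuclideanSpace.single_apply,
    apply_ite (starRingEnd ℂ), map_zero] at h
  simp only [Matrix.mul_apply, conjTranspose_apply, Matrix.of_apply, Matrix.one_apply]
  rw [← h]
  exact Finset.sum_congr rfl fun k _ => mul_comm _ _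

lemma kraus_reduce {n N : ℕ} (Φ : Matrix (Fin n) (Fin n) ℂ →ₗ[ℂ] Matrix (Fin n) (Fin n) ℂ)
    (E : Fin (N + 1) → Matrix (Fin n) (Fin n) ℂ)
    (hE : ∀ A, Φ A = ∑ k, E k * A * (E k)ᴴ)
    (g : Fin (N + 1) → ℂ) (hg : ∑ k, g k • E k = 0) (hg0 : g ≠ 0) :
    ∃ F : Fin N → Matrix (Fin n) (Fin n) ℂ, ∀ A, Φ A = ∑ k, F k * A * (F k)ᴴ := by
  let gE : EuclideanSpace ℂ (Fin (N + 1)) := WithLp.toLp 2 g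
  have hgE0 : gE ≠ 0 := fun h => hg0 (by simpa [gE] using congrArg WithLp.ofLp h)
  let u : EuclideanSpace ℂ (Fin (N + 1)) := ‖gE‖⁻¹ • gE
  have hnu : ‖u‖ = 1 := norm_smul_inv_norm hgE0
  have hup : ∀ k, u k = (‖gE‖⁻¹ : ℂ) * g k := fun k => by
    show (‖gE‖⁻¹ • gE) k = _
    simp [gE, Complex.real_smul]
  have husum : ∑ k, u k • E k = 0 := by
    rw [show (0 : Matrix (Fin n) (Fin n) ℂ) = (‖gE‖⁻¹:ℂ) • (0 : Matrix (Fin n) (Fin n) ℂ) by simp,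
      ← hg, Finset.smul_sum]
    exact Finset.sum_congr rfl fun k _ => by rw [hup k, ← smul_smul]
  have hcard : Module.finrank ℂ (EuclideanSpace ℂ (Fin (N + 1))) = Fintype.card (Fin (N + 1)) := by
    simp
  have horth : Orthonormal ℂ (Set.restrict {(0 : Fin (N+1))} (fun _ => u)) := by
    rw [orthonormal_iff_ite]
    rintro ⟨i, hi⟩ ⟨j, hj⟩
    simp only [Set.mem_singleton_iff] at hi hj
    subst hi; subst hj
    simp only [Set.restrict_apply, if_pos rfl]
    rw [@inner_self_eq_norm_sq_to_K ℂ, show ‖Set.restrict {(0 : Fin (N+1))} (fun _ => u) ⟨0, hi⟩‖ = 1 from hnu]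
    norm_num
  obtain ⟨b, hb⟩ := horth.exists_orthonormalBasis_extension_of_card_eq hcard
  have hb0 : b 0 = u := hb 0 rfl
  refine ⟨fun j => ∑ k, b j.succ k • E k, fun A => ?_⟩
  have h1 : ∑ k : Fin (N+1), (∑ i, b k i • E i) * A * (∑ i, b k i • E i)ᴴ
      = ∑ k, E k * A * (E k)ᴴ := by
    have h := kraus_comb E (Matrix.of fun k i => b k i) A
    rw [onb_matrix_unitary b] at h
    simpa [Matrix.one_apply, ite_smul, Finset.sum_ite_eq] using h
  rw [hE, ← h1, Fin.sum_univ_succ, hb0, husum]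
  simp

lemma aux_psd {r : ℕ} (c : Matrix (Fin r) (Fin r) ℂ) (hc : c.IsHermitian) :
    ∃ t : ℝ, 0 < t ∧ PosSemidef (1 + (t:ℂ) • c) ∧ PosSemidef (1 - (t:ℂ) • c) := by
  set K : ℝ := ∑ i, ∑ j, ‖c i j‖ with hK
  have hK0 : 0 ≤ K := Finset.sum_nonneg fun i _ => Finset.sum_nonneg fun j _ => by positivity
  have hcij : ∀ i j, (starRingEnd ℂ) (c i j) = c j i := fun i j => by
    conv_rhs => rw [← hc]
    rfl
  have key : ∀ s : ℝ, |s| ≤ (K+1)⁻¹ → PosSemidef (1 + (s:ℂ) • c) := by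
    intro s hs
    rw [posSemidef_iff_dotProduct_mulVec]
    constructor
    · show (1 + (s:ℂ) • c)ᴴ = _
      rw [conjTranspose_add, conjTranspose_smul, conjTranspose_one, Complex.star_def,
        Complex.conj_ofReal, hc]
    · intro x
      set S : ℝ := ∑ i, Complex.normSq (x i) with hS
      have hS0 : 0 ≤ S := Finset.sum_nonneg fun i _ => normSq_nonneg _
      set Q : ℂ := ∑ i, ∑ j, (starRingEnd ℂ) (x i) * c i j * x j with hQdef
      have hxx : star x ⬝ᵥ x = (S : ℂ) := by
        simp only [dotProduct, Pi.star_apply, Complex.star_def, hS]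
        push_cast
        exact Finset.sum_congr rfl fun i _ => by rw [normSq_eq_conj_mul_self]
      have hQ : star x ⬝ᵥ (c *ᵥ x) = Q := by
        simp only [dotProduct, mulVec, dotProduct, Pi.star_apply, Complex.star_def, hQdef,
          Finset.mul_sum]
        exact Finset.sum_congr rfl fun i _ => Finset.sum_congr rfl fun j _ => by ring
      have hconjQ : (starRingEnd ℂ) Q = Q := by
        rw [hQdef, map_sum]
        rw [show ∑ i, ∑ j, (starRingEnd ℂ) (x i) * c i j * x j
            = ∑ i, ∑ j, (starRingEnd ℂ) (x j) * c j i * x i from Finset.sum_comm]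
        refine Finset.sum_congr rfl fun i _ => ?_
        rw [map_sum]
        refine Finset.sum_congr rfl fun j _ => ?_
        rw [_root_.map_mul, _root_.map_mul, hcij, Complex.conj_conj]
        ring
      have him : Q.im = 0 := Complex.conj_eq_iff_im.mp hconjQ
      have habs : ‖Q‖ ≤ K * S := by
        calc ‖Q‖ ≤ ∑ i, ‖∑ j, (starRingEnd ℂ) (x i) * c i j * x j‖ :=
              norm_sum_le _ _
          _ ≤ ∑ i, ∑ j, ‖(starRingEnd ℂ) (x i) * c i j * x j‖ :=
              Finset.sum_le_sum fun i _ => norm_sum_le _ _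
          _ ≤ ∑ i, ∑ j, ‖c i j‖ * S := by
              refine Finset.sum_le_sum fun i _ => Finset.sum_le_sum fun j _ => ?_
              rw [norm_mul, norm_mul, Complex.norm_conj]
              have h1 : ‖x i‖ ^ 2 ≤ S := by
                rw [Complex.sq_norm]
                exact Finset.single_le_sum (fun k _ => normSq_nonneg (x k)) (Finset.mem_univ i)
              have h2 : ‖x j‖ ^ 2 ≤ S := by
                rw [Complex.sq_norm]
                exact Finset.single_le_sum (fun k _ => normSq_nonneg (x k)) (Finset.mem_univ j)
              have h3 : ‖x i‖ * ‖x j‖ ≤ S := by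
                nlinarith [norm_nonneg (x i), norm_nonneg (x j)]
              calc ‖x i‖ * ‖c i j‖ * ‖x j‖
                  = ‖c i j‖ * (‖x i‖ * ‖x j‖) := by ring
                _ ≤ ‖c i j‖ * S :=
                    mul_le_mul_of_nonneg_left h3 (norm_nonneg _)
          _ = K * S := by rw [hK]; simp [Finset.sum_mul]
      have hexpand : star x ⬝ᵥ ((1 + (s:ℂ) • c) *ᵥ x) = (S : ℂ) + (s:ℂ) * Q := by
        rw [add_mulVec, smul_mulVec, dotProduct_add, dotProduct_smul, one_mulVec,
          hxx, hQ, smul_eq_mul]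
      rw [hexpand, Complex.le_def]
      constructor
      · simp only [Complex.add_re, Complex.ofReal_re, Complex.mul_re, Complex.ofReal_im,
          Complex.zero_re, him, mul_zero, zero_mul, sub_zero]
        have h4 : |s * Q.re| ≤ (K+1)⁻¹ * (K * S) := by
          rw [abs_mul]
          exact mul_le_mul hs ((Complex.abs_re_le_norm Q).trans habs) (abs_nonneg _) (by positivity)
        have h5 : (K+1)⁻¹ * (K+1) = 1 := by field_simp
        have h6 : -((K+1)⁻¹ * (K * S)) ≤ s * Q.re := neg_le_of_abs_le h4
        nlinarith [inv_nonneg.mpr (by linarith : (0:ℝ) ≤ K + 1)]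
      · simp [him]
  refine ⟨(K + 1)⁻¹, by positivity, key _ (by rw [abs_of_pos (by positivity)]), ?_⟩
  have heq : (1 - (((K+1)⁻¹ : ℝ) : ℂ) • c : Matrix (Fin r) (Fin r) ℂ)
      = 1 + ((-(K+1)⁻¹ : ℝ) : ℂ) • c := by
    rw [Complex.ofReal_neg, neg_smul, sub_eq_add_neg]
  rw [heq]
  exact key _ (by rw [abs_neg, abs_of_pos (by positivity)])

lemma mul_std_mul {n : ℕ} (X Y : Matrix (Fin n) (Fin n) ℂ) (p q a b : Fin n) :
    (X * Matrix.single p q (1:ℂ) * Y) a b = X a p * Y q b := by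
  rw [mul_assoc, Matrix.mul_apply]
  simp [Matrix.mul_apply, Matrix.single, ite_and, ite_mul, mul_ite, Finset.sum_ite_eq]

lemma lemC {n r : ℕ} {E : Fin r → Matrix (Fin n) (Fin n) ℂ} (hE : LinearIndependent ℂ E)
    (d : Matrix (Fin r) (Fin r) ℂ)
    (h : ∀ A, ∑ i, ∑ j, d i j • (E j * A * (E i)ᴴ) = 0) : d = 0 := by
  have hent : ∀ p q a b : Fin n,
      ∑ i, ∑ j, d i j * (E j a p * (starRingEnd ℂ) (E i b q)) = 0 := by
    intro p q a b
    have h1 := h (Matrix.single p q (1:ℂ))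
    have h2 := congrFun (congrFun (congrArg (fun M => (M : Matrix (Fin n) (Fin n) ℂ)) h1) a) b
    simp only [Matrix.sum_apply, Matrix.smul_apply, Matrix.zero_apply, smul_eq_mul] at h2
    rw [← h2]
    refine Finset.sum_congr rfl fun i _ => Finset.sum_congr rfl fun j _ => ?_
    rw [mul_std_mul, conjTranspose_apply]
    rfl
  have claim1 : ∀ (b q : Fin n) (j : Fin r), ∑ i, d i j * (starRingEnd ℂ) (E i b q) = 0 := by
    intro b q
    have hz : ∑ j, (∑ i, d i j * (starRingEnd ℂ) (E i b q)) • E j = 0 := by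
      ext a p
      simp only [Matrix.sum_apply, Matrix.smul_apply, Matrix.zero_apply, smul_eq_mul]
      rw [← hent p q a b]
      rw [Finset.sum_comm]
      refine Finset.sum_congr rfl fun j _ => ?_
      rw [Finset.sum_mul]
      refine Finset.sum_congr rfl fun i _ => by ring
    exact Fintype.linearIndependent_iff.mp hE _ hz
  have claim2 : ∀ (j : Fin r) (i : Fin r), d i j = 0 := by
    intro j i
    have hz : ∑ i, (starRingEnd ℂ) (d i j) • E i = 0 := by
      ext b q
      simp only [Matrix.sum_apply, Matrix.smul_apply, Matrix.zero_apply, smul_eq_mul]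
      have h3 := congrArg (starRingEnd ℂ) (claim1 b q j)
      rw [map_sum, map_zero] at h3
      rw [← h3]
      exact Finset.sum_congr rfl fun i _ => by rw [_root_.map_mul, Complex.conj_conj]
    have h4 := Fintype.linearIndependent_iff.mp hE _ hz i
    have h0 := congrArg (starRingEnd ℂ) h4
    rwa [Complex.conj_conj, map_zero] at h0
  ext i j
  exact claim2 j i

/-- The perturbation map `A ↦ ∑ i j, d i j • (E j * A * (E i)ᴴ)` as a linear map. -/
noncomputable def psi {n r : ℕ} (E : Fin r → Matrix (Fin n) (Fin n) ℂ)
    (d : Matrix (Fin r) (Fin r) ℂ) :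
    Matrix (Fin n) (Fin n) ℂ →ₗ[ℂ] Matrix (Fin n) (Fin n) ℂ :=
  ∑ i, ∑ j, d i j • ((LinearMap.mulLeft ℂ (E j)).comp (LinearMap.mulRight ℂ ((E i)ᴴ)))

lemma psi_apply {n r : ℕ} (E : Fin r → Matrix (Fin n) (Fin n) ℂ)
    (d : Matrix (Fin r) (Fin r) ℂ) (A : Matrix (Fin n) (Fin n) ℂ) :
    psi E d A = ∑ i, ∑ j, d i j • (E j * A * (E i)ᴴ) := by
  simp [psi, LinearMap.sum_apply, LinearMap.mulLeft, LinearMap.mulRight, mul_assoc]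

lemma real_smul_matrix {n : ℕ} (t : ℝ) (M : Matrix (Fin n) (Fin n) ℂ) :
    t • M = (t : ℂ) • M := by
  ext a b
  simp [Complex.real_smul]

lemma crux_herm {n : ℕ}
    (ε : Matrix (Fin n) (Fin n) ℂ →ₗ[ℂ] Matrix (Fin n) (Fin n) ℂ)
    (hε : ε ∈ Set.extremePoints ℝ (UCPTset (Fin n)))
    {r : ℕ} (E : Fin r → Matrix (Fin n) (Fin n) ℂ)
    (hrep : ∀ A, ε A = ∑ k, E k * A * (E k)ᴴ)
    (hli : LinearIndependent ℂ E)
    (d : Matrix (Fin r) (Fin r) ℂ) (hd : d.IsHermitian)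
    (h1 : ∑ i, ∑ j, d i j • ((E i)ᴴ * E j) = 0)
    (h2 : ∑ i, ∑ j, d i j • (E j * (E i)ᴴ) = 0) : d = 0 := by
  obtain ⟨hmem, hext⟩ := hε
  obtain ⟨hCP, hTP, hU⟩ := hmem
  obtain ⟨t, ht, hP, hM⟩ := aux_psd d hd
  -- trace of psi is zero
  have tr0 : ∀ A, (psi E d A).trace = 0 := by
    intro A
    have : (psi E d A).trace = ((∑ i, ∑ j, d i j • ((E i)ᴴ * E j)) * A).trace := by
      rw [psi_apply]
      simp only [trace_sum, trace_smul, Finset.sum_mul, smul_mul_assoc]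
      refine Finset.sum_congr rfl fun i _ => Finset.sum_congr rfl fun j _ => ?_
      congr 1
      rw [trace_mul_comm, mul_assoc]
    rw [this, h1, zero_mul, trace_zero]
  -- psi is zero on the identity
  have un0 : psi E d 1 = 0 := by
    rw [psi_apply]
    simpa [mul_one] using h2
  -- the two perturbed maps
  have kraus_pm : ∀ s : ℝ, PosSemidef (1 + (s:ℂ) • d) →
      ∃ F : Fin r → Matrix (Fin n) (Fin n) ℂ,
        ∀ A, (ε + s • psi E d) A = ∑ k, F k * A * (F k)ᴴ := by
    intro s hpsd
    obtain ⟨B, hB⟩ : ∃ B : Matrix (Fin r) (Fin r) ℂ, 1 + (s:ℂ) • d = Bᴴ * B := by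
      open scoped MatrixOrder in exact CStarAlgebra.nonneg_iff_eq_star_mul_self.mp hpsd.nonneg
    refine ⟨fun k => ∑ i, B k i • E i, fun A => ?_⟩
    rw [kraus_comb E B A, ← hB]
    have expand : ∑ i, ∑ j, ((1 + (s:ℂ) • d) j i) • (E i * A * (E j)ᴴ)
        = (∑ i, E i * A * (E i)ᴴ) + (s:ℂ) • ∑ i, ∑ j, d j i • (E i * A * (E j)ᴴ) := by
      simp only [Matrix.add_apply, Matrix.smul_apply, smul_eq_mul, add_smul,
        Finset.sum_add_distrib, mul_smul, Finset.smul_sum]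
      congr 1
      · refine Finset.sum_congr rfl fun i _ => ?_
        simp [Matrix.one_apply, ite_smul, Finset.sum_ite_eq]
    rw [expand]
    have : ∑ i, ∑ j, d j i • (E i * A * (E j)ᴴ) = psi E d A := by
      rw [psi_apply, Finset.sum_comm]
    rw [this, LinearMap.add_apply, LinearMap.smul_apply, hrep, real_smul_matrix]
  have memP : (ε + t • psi E d) ∈ UCPTset (Fin n) := by
    obtain ⟨F, hF⟩ := kraus_pm t hP
    refine ⟨⟨r, F, hF⟩, fun A => ?_, ?_⟩
    · rw [LinearMap.add_apply, LinearMap.smul_apply, trace_add, trace_smul, tr0, smul_zero,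
        add_zero]
      exact hTP A
    · show (ε + t • psi E d) 1 = 1
      rw [LinearMap.add_apply, LinearMap.smul_apply, un0, smul_zero, add_zero]
      exact hU
  have memM : (ε - t • psi E d) ∈ UCPTset (Fin n) := by
    have hP' : PosSemidef (1 + ((-t : ℝ):ℂ) • d) := by
      have : (1 + ((-t : ℝ):ℂ) • d) = 1 - (t:ℂ) • d := by
        rw [Complex.ofReal_neg, neg_smul, ← sub_eq_add_neg]
      rw [this]; exact hM
    obtain ⟨F, hF⟩ := kraus_pm (-t) hP'
    have hsub : ε + (-t) • psi E d = ε - t • psi E d := by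
      module
    rw [hsub] at hF
    refine ⟨⟨r, F, hF⟩, fun A => ?_, ?_⟩
    · rw [LinearMap.sub_apply, LinearMap.smul_apply, trace_sub, trace_smul, tr0, smul_zero,
        sub_zero]
      exact hTP A
    · show (ε - t • psi E d) 1 = 1
      rw [LinearMap.sub_apply, LinearMap.smul_apply, un0, smul_zero, sub_zero]
      exact hU
  have hseg : ε ∈ openSegment ℝ (ε + t • psi E d) (ε - t • psi E d) := by
    refine ⟨1/2, 1/2, by norm_num, by norm_num, by norm_num, ?_⟩
    module
  have hPe := hext memP memM hseg
  -- so t • psi = 0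
  have hps0 : psi E d = 0 := by
    have h0 : t • psi E d = 0 := by
      have := congrArg (fun f => f - ε) hPe
      simpa using this
    have : psi E d = t⁻¹ • (t • psi E d) := by
      rw [smul_smul, inv_mul_cancel₀ ht.ne', one_smul]
    rw [this, h0, smul_zero]
  refine lemC hli d fun A => ?_
  have := congrArg (fun f : Matrix (Fin n) (Fin n) ℂ →ₗ[ℂ] Matrix (Fin n) (Fin n) ℂ => f A) hps0
  simp only [LinearMap.zero_apply] at this
  rw [← psi_apply E d A, this]

lemma crux {n : ℕ}
    (ε : Matrix (Fin n) (Fin n) ℂ →ₗ[ℂ] Matrix (Fin n) (Fin n) ℂ)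
    (hε : ε ∈ Set.extremePoints ℝ (UCPTset (Fin n)))
    {r : ℕ} (E : Fin r → Matrix (Fin n) (Fin n) ℂ)
    (hrep : ∀ A, ε A = ∑ k, E k * A * (E k)ᴴ)
    (hli : LinearIndependent ℂ E)
    (c : Matrix (Fin r) (Fin r) ℂ)
    (h1 : ∑ i, ∑ j, c i j • ((E i)ᴴ * E j) = 0)
    (h2 : ∑ i, ∑ j, c i j • (E j * (E i)ᴴ) = 0) : c = 0 := by
  have hs1 : ∑ i, ∑ j, (cᴴ i j) • ((E i)ᴴ * E j) = 0 := by
    have h := congrArg conjTranspose h1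
    simp only [conjTranspose_sum, conjTranspose_smul, conjTranspose_mul,
      conjTranspose_conjTranspose, conjTranspose_zero] at h
    simp only [conjTranspose_apply]
    rw [Finset.sum_comm]
    exact h
  have hs2 : ∑ i, ∑ j, (cᴴ i j) • (E j * (E i)ᴴ) = 0 := by
    have h := congrArg conjTranspose h2
    simp only [conjTranspose_sum, conjTranspose_smul, conjTranspose_mul,
      conjTranspose_conjTranspose, conjTranspose_zero] at h
    simp only [conjTranspose_apply]
    rw [Finset.sum_comm]
    exact h
  have hc1 : c + cᴴ = 0 := by
    refine crux_herm ε hε E hrep hli _ (isHermitian_add_transpose_self c) ?_ ?_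
    · simp only [Matrix.add_apply, add_smul, Finset.sum_add_distrib, h1, hs1, add_zero]
    · simp only [Matrix.add_apply, add_smul, Finset.sum_add_distrib, h2, hs2, add_zero]
  have hc2 : Complex.I • (c - cᴴ) = 0 := by
    refine crux_herm ε hε E hrep hli _ ?_ ?_ ?_
    · show (Complex.I • (c - cᴴ))ᴴ = _
      rw [conjTranspose_smul, conjTranspose_sub, conjTranspose_conjTranspose,
        Complex.star_def, Complex.conj_I, neg_smul, ← smul_neg, neg_sub]
    · have e : ∑ i, ∑ j, (Complex.I • (c - cᴴ)) i j • ((E i)ᴴ * E j)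
          = Complex.I • ((∑ i, ∑ j, c i j • ((E i)ᴴ * E j))
            - ∑ i, ∑ j, cᴴ i j • ((E i)ᴴ * E j)) := by
        simp only [Matrix.smul_apply, Matrix.sub_apply, smul_eq_mul, mul_smul,
          sub_smul, smul_sub, Finset.smul_sum, Finset.sum_sub_distrib]
      rw [e, h1, hs1, sub_zero, smul_zero]
    · have e : ∑ i, ∑ j, (Complex.I • (c - cᴴ)) i j • (E j * (E i)ᴴ)
          = Complex.I • ((∑ i, ∑ j, c i j • (E j * (E i)ᴴ))
            - ∑ i, ∑ j, cᴴ i j • (E j * (E i)ᴴ)) := by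
        simp only [Matrix.smul_apply, Matrix.sub_apply, smul_eq_mul, mul_smul,
          sub_smul, smul_sub, Finset.smul_sum, Finset.sum_sub_distrib]
      rw [e, h2, hs2, sub_zero, smul_zero]
  have hc2' : c - cᴴ = 0 := by
    have h := congrArg (fun M => (-Complex.I) • M) hc2
    simpa [smul_smul] using h
  have h2c : (2:ℂ) • c = 0 := by
    have : (2:ℂ) • c = (c + cᴴ) + (c - cᴴ) := by
      rw [two_smul]; abel
    rw [this, hc1, hc2', add_zero]
  have := congrArg (fun M => ((2:ℂ)⁻¹) • M) h2c
  simpa [smul_smul] using this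

end Aux

/-- the Choi rank of an extreme UCPT map satisfies CR(ε)² ≤ 2n²,
i.e. CR(ε) ≤ √2·n. -/
theorem choiRank_le_of_extreme_UCPT {n : ℕ}
    (ε : Matrix (Fin n) (Fin n) ℂ →ₗ[ℂ] Matrix (Fin n) (Fin n) ℂ)
    (hε : ε ∈ Set.extremePoints ℝ (UCPTset (Fin n))) :
    CR ε ^ 2 ≤ 2 * n ^ 2 ∧ (CR ε : ℝ) ≤ Real.sqrt 2 * n := by
  obtain ⟨N₀, E₀, hE₀⟩ := hε.1.1
  have hne : {N : ℕ | ∃ E : Fin N → Matrix (Fin n) (Fin n) ℂ,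
      ∀ A, ε A = ∑ k, E k * A * (E k)ᴴ}.Nonempty := ⟨N₀, E₀, hE₀⟩
  obtain ⟨E, hrep⟩ := Nat.sInf_mem hne
  -- minimal Kraus families are linearly independent
  have hli : LinearIndependent ℂ E := by
    by_contra hdep
    obtain ⟨g, hgsum, i, hgi⟩ := Fintype.not_linearIndependent_iff.mp hdep
    have hpos : 0 < CR ε := i.pos
    obtain ⟨N, hN⟩ : ∃ N, CR ε = N + 1 := ⟨CR ε - 1, by omega⟩
    set E' : Fin (N+1) → Matrix (Fin n) (Fin n) ℂ := fun k => E (Fin.cast hN.symm k) with hE'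
    have hrep' : ∀ A, ε A = ∑ k, E' k * A * (E' k)ᴴ := by
      intro A
      rw [hrep A]
      exact Fintype.sum_equiv (finCongr hN) _ _ (fun k => by simp [hE']; rfl)
    have hg' : ∑ k, (g (Fin.cast hN.symm k)) • E' k = 0 := by
      have h := Fintype.sum_equiv (finCongr hN) (fun k => g k • E k)
        (fun k : Fin (N+1) => g (Fin.cast hN.symm k) • E' k) (fun k => by simp [hE']; rfl)
      exact h.symm.trans hgsum
    have hg0 : (fun k => g (Fin.cast hN.symm k)) ≠ 0 := by
      intro h0
      apply hgi
      have := congrFun h0 (Fin.cast hN i)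
      exact this
    obtain ⟨F, hF⟩ := kraus_reduce ε E' hrep' _ hg' hg0
    have hle : CR ε ≤ N := Nat.sInf_le ⟨F, hF⟩
    omega
  -- the key linear independence
  have hbig : LinearIndependent ℂ (fun p : Fin (CR ε) × Fin (CR ε) =>
      (((E p.1)ᴴ * E p.2, E p.2 * (E p.1)ᴴ) :
        Matrix (Fin n) (Fin n) ℂ × Matrix (Fin n) (Fin n) ℂ)) := by
    rw [Fintype.linearIndependent_iff]
    intro g hg
    have h1 : ∑ i, ∑ j, g (i, j) • ((E i)ᴴ * E j) = 0 := by
      have h := congrArg Prod.fst hg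
      simpa [Prod.fst_sum, Fintype.sum_prod_type] using h
    have h2 : ∑ i, ∑ j, g (i, j) • (E j * (E i)ᴴ) = 0 := by
      have h := congrArg Prod.snd hg
      simpa [Prod.snd_sum, Fintype.sum_prod_type] using h
    have hc := crux ε hε E hrep hli (Matrix.of fun i j => g (i, j))
      (by exact h1) (by exact h2)
    intro p
    have := congrFun (congrFun hc p.1) p.2
    exact this
  have hcard := hbig.fintype_card_le_finrank
  rw [Fintype.card_prod, Fintype.card_fin, Module.finrank_prod] at hcard
  have hfr : Module.finrank ℂ (Matrix (Fin n) (Fin n) ℂ) = n * n := by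
    rw [Module.finrank_matrix]
    simp
  rw [hfr] at hcard
  have hsq : CR ε ^ 2 ≤ 2 * n ^ 2 := by nlinarith [hcard]
  refine ⟨hsq, ?_⟩
  have h2n : ((CR ε : ℝ))^2 ≤ 2 * (n:ℝ)^2 := by exact_mod_cast hsq
  have hs := Real.sqrt_le_sqrt h2n
  rw [Real.sqrt_sq (by positivity)] at hs
  calc (CR ε : ℝ) ≤ Real.sqrt (2 * (n:ℝ)^2) := hs
    _ = Real.sqrt 2 * n := by
        rw [Real.sqrt_mul (by norm_num), Real.sqrt_sq (by positivity)]
end
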